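/- arXiv:0711.3493 — 3 statements merged into one kernel-verified Lean document; each statement's English description precedes it below -/
import Mathlib

section
/- Let A and B be finite sets, F a bipartite graph with parts A and B, |A| = m, and s a positive integer. If t is the maximum integer x such that F contains a complete bipartite subgraph with a part of size s in A and a part of size x in B, then t · C(m, s) ≥ Σ_{u ∈ B} C(d(u), s), where d(u) is the degree of u in F and C denotes the binomial coefficient. -/
/-- Double counting inequality (1) in the proof of Lemma 1: if `t` is the maximum size of a
part in `B` of a complete bipartite subgraph of `F` whose part in `A` has size `s`, then
`t·C(m,s) ≥ Σ_{u ∈ B} C(d(u), s)`. -/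
theorem stmt_1 {α β : Type*} [DecidableEq α] [DecidableEq β]
    (A : Finset α) (B : Finset β) (F : Finset (α × β)) (hF : F ⊆ A ×ˢ B)
    (m : ℕ) (hm : A.card = m) (s : ℕ) (hs : 1 ≤ s)
    (t : ℕ)
    (ht : ∃ S T, S ⊆ A ∧ T ⊆ B ∧ S.card = s ∧ T.card = t ∧
      ∀ a ∈ S, ∀ b ∈ T, (a, b) ∈ F)
    (htmax : ∀ x : ℕ, (∃ S T, S ⊆ A ∧ T ⊆ B ∧ S.card = s ∧ T.card = x ∧
      ∀ a ∈ S, ∀ b ∈ T, (a, b) ∈ F) → x ≤ t) :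
    t * m.choose s ≥ ∑ u ∈ B, ((A.filter fun a => (a, u) ∈ F).card).choose s := by
  have key : ∀ u ∈ B, ((A.filter fun a => (a, u) ∈ F).card).choose s
      = ∑ S ∈ A.powersetCard s, if ∀ a ∈ S, (a, u) ∈ F then 1 else 0 := by
    intro u _
    rw [← Finset.card_filter]
    rw [← Finset.card_powersetCard]
    congr 1
    ext S
    simp only [Finset.mem_filter, Finset.mem_powersetCard, Finset.subset_iff,
      Finset.mem_filter]
    aesop
  rw [Finset.sum_congr rfl key, Finset.sum_comm]
  have hb : ∀ S ∈ A.powersetCard s,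
      (∑ u ∈ B, if ∀ a ∈ S, (a, u) ∈ F then 1 else 0) ≤ t := by
    intro S hS
    rw [Finset.mem_powersetCard] at hS
    rw [← Finset.card_filter]
    exact htmax _ ⟨S, B.filter fun u => ∀ a ∈ S, (a, u) ∈ F, hS.1,
      Finset.filter_subset _ _, hS.2, rfl, fun a ha b hb => by
        simp only [Finset.mem_filter] at hb; exact hb.2 a ha⟩
  calc ∑ S ∈ A.powersetCard s, (∑ u ∈ B, if ∀ a ∈ S, (a, u) ∈ F then 1 else 0)
      ≤ ∑ _S ∈ A.powersetCard s, t := Finset.sum_le_sum hb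
    _ = (A.powersetCard s).card * t := by rw [Finset.sum_const, smul_eq_mul]
    _ = t * m.choose s := by rw [Finset.card_powersetCard, hm, mul_comm]
end

section
/- The function f : ℝ → ℝ defined by f(x) = x(x-1)(x-2)···(x-s+1)/s! for x ≥ s-1 and f(x) = 0 for x < s-1, where s is a positive integer, is convex on ℝ. -/
private lemma prod_props (s : ℕ) (n : ℕ) (hn : n ≤ s) :
    ConvexOn ℝ (Set.Ici ((s : ℝ) - 1)) (fun x => ∏ i ∈ Finset.range n, (x - (i : ℝ))) ∧
    MonotoneOn (fun x => ∏ i ∈ Finset.range n, (x - (i : ℝ))) (Set.Ici ((s : ℝ) - 1)) ∧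
    (∀ x ∈ Set.Ici ((s : ℝ) - 1), 0 ≤ ∏ i ∈ Finset.range n, (x - (i : ℝ))) := by
  induction n with
  | zero =>
    simp only [Finset.range_zero, Finset.prod_empty]
    exact ⟨convexOn_const 1 (convex_Ici _), monotoneOn_const, fun x _ => zero_le_one⟩
  | succ n ih =>
    obtain ⟨hc, hm, h0⟩ := ih (le_of_lt (Nat.lt_of_succ_le hn))
    have hns : (n : ℝ) ≤ (s : ℝ) - 1 := by
      have : (n : ℝ) + 1 ≤ (s : ℝ) := by exact_mod_cast hn
      linarith
    -- the new factor
    have hfc : ConvexOn ℝ (Set.Ici ((s : ℝ) - 1)) (fun x : ℝ => x - (n : ℝ)) := by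
      have : ConvexOn ℝ (Set.Ici ((s : ℝ) - 1)) (fun x : ℝ => x) :=
        (convexOn_id (convex_Ici _))
      exact this.sub (concaveOn_const _ (convex_Ici _))
    have hfm : MonotoneOn (fun x : ℝ => x - (n : ℝ)) (Set.Ici ((s : ℝ) - 1)) :=
      fun a _ b _ hab => by simpa using hab
    have hf0 : ∀ x ∈ Set.Ici ((s : ℝ) - 1), 0 ≤ x - (n : ℝ) := by
      intro x hx
      have : (s : ℝ) - 1 ≤ x := hx
      linarith
    have key : ConvexOn ℝ (Set.Ici ((s : ℝ) - 1))
        ((fun x => ∏ i ∈ Finset.range n, (x - (i : ℝ))) * (fun x : ℝ => x - (n : ℝ))) :=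
      hc.mul hfc h0 hf0 (hm.monovaryOn hfm)
    have heq : ((fun x => ∏ i ∈ Finset.range n, (x - (i : ℝ))) * (fun x : ℝ => x - (n : ℝ)))
        = fun x => ∏ i ∈ Finset.range (n + 1), (x - (i : ℝ)) := by
      funext x
      simp [Finset.prod_range_succ]
    refine ⟨heq ▸ key, ?_, ?_⟩
    · intro a ha b hb hab
      simp only [Finset.prod_range_succ]
      exact mul_le_mul (hm ha hb hab) (by simpa using hab) (hf0 a ha) (h0 b hb)
    · intro x hx
      simp only [Finset.prod_range_succ]
      exact mul_nonneg (h0 x hx) (hf0 x hx)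

/-- The extension of the generalized binomial coefficient `C(x,s)` by `0` for `x < s-1`
is a convex function on `ℝ`. -/
theorem stmt_3 (s : ℕ) (hs : 1 ≤ s) (f : ℝ → ℝ)
    (hf : ∀ x : ℝ, f x = if x < (s : ℝ) - 1 then 0
      else (∏ i ∈ Finset.range s, (x - i)) / (Nat.factorial s)) :
    ConvexOn ℝ Set.univ f := by
  set a : ℝ := (s : ℝ) - 1 with ha
  set g : ℝ → ℝ := fun x => (∏ i ∈ Finset.range s, (x - (i : ℝ))) / (Nat.factorial s) with hg
  obtain ⟨hc, hm, h0⟩ := prod_props s s le_rfl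
  have hfac : (0 : ℝ) < (Nat.factorial s : ℝ) := by exact_mod_cast Nat.factorial_pos s
  -- g is convex and monotone on Ici a
  have hgc : ConvexOn ℝ (Set.Ici a) g := by
    have := hc.smul (c := (Nat.factorial s : ℝ)⁻¹) (by positivity)
    convert this using 2 with x
    · rfl
    · rfl
    · simp [hg, div_eq_inv_mul]
  have hgm : MonotoneOn g (Set.Ici a) := by
    intro x hx y hy hxy
    exact div_le_div_of_nonneg_right (hm hx hy hxy) hfac.le |>.trans_eq rfl
  -- g a = 0
  have hga : g a = 0 := by
    have hmem : s - 1 ∈ Finset.range s := by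
      exact Finset.mem_range.mpr (Nat.sub_lt (Nat.lt_of_lt_of_le Nat.zero_lt_one hs) Nat.one_pos)
    have : (∏ i ∈ Finset.range s, (a - (i : ℝ))) = 0 := by
      apply Finset.prod_eq_zero hmem
      have : ((s - 1 : ℕ) : ℝ) = (s : ℝ) - 1 := by
        have := Nat.cast_sub hs (R := ℝ)
        simpa using this
      rw [ha, this]; ring
    simp [hg, this]
  -- f = g ∘ max · a
  have hfeq : f = g ∘ (fun x => max x a) := by
    funext x
    rw [hf x]
    by_cases hx : x < a
    · simp only [if_pos hx, Function.comp]
      rw [max_eq_right hx.le, hga]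
    · simp only [if_neg hx, Function.comp]
      rw [max_eq_left (not_lt.mp hx)]
  rw [hfeq]
  -- max x a is convex on univ, with image Ici a
  have himg : (fun x => max x a) '' Set.univ = Set.Ici a := by
    ext y
    constructor
    · rintro ⟨x, -, rfl⟩
      exact le_max_right x a
    · intro hy
      exact ⟨y, Set.mem_univ y, max_eq_left hy⟩
  have hmaxc : ConvexOn ℝ Set.univ (fun x : ℝ => max x a) := by
    have := (convexOn_id (convex_univ (𝕜 := ℝ) (E := ℝ))).sup (convexOn_const a convex_univ)
    exact this
  exact ConvexOn.comp (himg ▸ hgc) hmaxc (himg ▸ hgm)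
end

section
/- Base case r = 2: let 0 < c ≤ 1/2 and let G be a graph on n ≥ 2 vertices with more than c·n² edges counted as ordered pairs (i.e., at least c·n² ordered adjacent pairs). Then G contains a complete bipartite subgraph K(s, t) with s = ⌊c⁴ ln n⌋ and t > n^{1−c}. -/
set_option maxHeartbeats 1000000

open Finset

section Helpers
variable {V : Type*} [Fintype V] [DecidableEq V]

omit [DecidableEq V] in
lemma pairs_card_aux (G : SimpleGraph V) [DecidableRel G.Adj] :
    Nat.card {p : V × V // G.Adj p.1 p.2} = ∑ v, G.degree v := by
  rw [Nat.card_eq_fintype_card, ← SimpleGraph.dart_card_eq_sum_degrees]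
  exact Fintype.card_congr
    ⟨fun p => ⟨p.1, p.2⟩, fun d => ⟨d.toProd, d.adj⟩, fun _ => rfl, fun _ => rfl⟩

lemma count_inj_aux (G : SimpleGraph V) [DecidableRel G.Adj] (s : ℕ) (v : V) :
    (univ.filter (fun f : Fin s → V => Function.Injective f ∧ ∀ i, G.Adj (f i) v)).card
      = (G.degree v).descFactorial s := by
  have h1 : Fintype.card (Fin s ↪ (G.neighborFinset v)) = (G.degree v).descFactorial s := by
    rw [Fintype.card_embedding_eq, Fintype.card_coe, Fintype.card_fin]
    rfl
  rw [← h1, ← Fintype.card_subtype]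
  apply Fintype.card_congr
  refine
    { toFun := fun g => ⟨fun i => ⟨g.1 i, by
        rw [SimpleGraph.mem_neighborFinset]; exact (g.2.2 i).symm⟩,
        fun i j h => g.2.1 (congrArg Subtype.val h)⟩
      invFun := fun e => ⟨fun i => (e i : V),
        ⟨fun i j h => e.injective (Subtype.ext h),
         fun i => ((G.mem_neighborFinset v _).mp (e i).2).symm⟩⟩
      left_inv := fun g => rfl
      right_inv := fun e => by ext i; rfl }

lemma swap_sum_aux (G : SimpleGraph V) [DecidableRel G.Adj] (s : ℕ) :
    ∑ f ∈ univ.filter (fun f : Fin s → V => Function.Injective f),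
        (univ.filter (fun v => ∀ i, G.Adj (f i) v)).card
      = ∑ v, (G.degree v).descFactorial s := by
  simp_rw [Finset.card_filter]
  rw [Finset.sum_comm]
  refine Finset.sum_congr rfl fun v _ => ?_
  rw [← Finset.card_filter, Finset.filter_filter, count_inj_aux G s v]

end Helpers

/-- Base case `r = 2` of Theorem 3: a graph on `n ≥ 2` vertices with at least `c·n²`
ordered adjacent pairs contains a complete bipartite subgraph `K(s,t)` with
`s = ⌊c⁴ ln n⌋` and `t > n^(1-c)`. -/
theorem stmt_16 {V : Type*} [Fintype V] [DecidableEq V]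
    (G : SimpleGraph V) (n : ℕ) (hn : Fintype.card V = n) (hn2 : 2 ≤ n)
    (c : ℝ) (hc0 : 0 < c) (hc1 : c ≤ 1/2)
    (hedges : (Nat.card {p : V × V // G.Adj p.1 p.2} : ℝ) ≥ c * (n : ℝ) ^ 2) :
    ∃ S T : Finset V, Disjoint S T ∧ S.card = ⌊c ^ 4 * Real.log n⌋₊ ∧
      ((T.card : ℝ) > (n : ℝ) ^ ((1 : ℝ) - c)) ∧
      ∀ u ∈ S, ∀ v ∈ T, G.Adj u v := by
  classical
  set s : ℕ := ⌊c ^ 4 * Real.log n⌋₊ with hs_def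
  have hn1R : (1 : ℝ) < (n : ℝ) := by exact_mod_cast hn2.trans_lt' one_lt_two
  have hn0R : (0 : ℝ) < (n : ℝ) := by linarith
  have hL0 : 0 < Real.log n := Real.log_pos hn1R
  have hBnn : (0 : ℝ) ≤ (n : ℝ) ^ ((1 : ℝ) - c) := Real.rpow_nonneg hn0R.le _
  rcases Nat.eq_zero_or_pos s with hs0 | hs1
  · refine ⟨∅, univ, Finset.disjoint_empty_left _, by simp [hs0], ?_, ?_⟩
    · rw [Finset.card_univ, hn]
      calc (n : ℝ) ^ ((1 : ℝ) - c) < (n : ℝ) ^ (1 : ℝ) :=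
            Real.rpow_lt_rpow_of_exponent_lt hn1R (by linarith)
        _ = (n : ℝ) := Real.rpow_one _
    · intro u hu; exact absurd hu (Finset.notMem_empty u)
  -- main case
  have hs_le : (s : ℝ) ≤ c ^ 4 * Real.log n := Nat.floor_le (by positivity)
  have hlogn_le : Real.log n ≤ (n : ℝ) := by
    have := Real.log_le_sub_one_of_pos hn0R
    linarith
  have hsum_deg : c * (n : ℝ) ^ 2 ≤ ∑ v, (G.degree v : ℝ) := by
    rw [pairs_card_aux G] at hedges
    push_cast at hedges
    linarith
  set g : V → ℝ := fun v => max ((G.degree v : ℝ) - s) 0 with hg_def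
  have hg_nn : ∀ v, 0 ≤ g v := fun v => le_max_right _ _
  -- lower bound on sum of g
  have hsn : (s : ℝ) * (n : ℝ) ≤ (c / 2) * (n : ℝ) ^ 2 := by
    have h1 : (s : ℝ) ≤ (c / 8) * n := by
      have hc3 : c ^ 3 ≤ 1 / 8 := by
        calc c ^ 3 ≤ (1/2 : ℝ) ^ 3 := pow_le_pow_left₀ hc0.le hc1 3
          _ = 1 / 8 := by norm_num
      have hc4 : c ^ 4 ≤ c / 8 := by nlinarith [mul_le_mul_of_nonneg_left hc3 hc0.le]
      calc (s : ℝ) ≤ c ^ 4 * Real.log n := hs_le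
        _ ≤ c ^ 4 * n := by nlinarith
        _ ≤ (c / 8) * n := mul_le_mul_of_nonneg_right hc4 hn0R.le
    nlinarith
  have hg_sum : (c / 2) * (n : ℝ) ^ 2 ≤ ∑ v, g v := by
    have h1 : ∑ v, ((G.degree v : ℝ) - s) ≤ ∑ v, g v :=
      Finset.sum_le_sum fun v _ => le_max_left _ _
    have h2 : ∑ v, ((G.degree v : ℝ) - s) = (∑ v, (G.degree v : ℝ)) - n * s := by
      rw [Finset.sum_sub_distrib]
      simp [Finset.card_univ, hn, mul_comm]
    nlinarith
  -- power mean
  have hcard : (univ : Finset V).card = n := by rw [Finset.card_univ, hn]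
  have hpm : ((c / 2) * (n : ℝ) ^ 2) ^ s / (n : ℝ) ^ (s - 1) ≤ ∑ v, g v ^ s := by
    have := pow_sum_div_card_le_sum_pow (s := (univ : Finset V)) (f := g)
      (fun v _ => hg_nn v) (s - 1)
    rw [hcard, Nat.sub_add_cancel hs1] at this
    refine le_trans ?_ this
    apply div_le_div_of_nonneg_right ?_ (by positivity)
    · exact pow_le_pow_left₀ (by positivity) hg_sum s
  have hlhs : ((c / 2) * (n : ℝ) ^ 2) ^ s / (n : ℝ) ^ (s - 1)
      = (c / 2) ^ s * (n : ℝ) ^ (s + 1) := by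
    have h2s : 2 * s = (s + 1) + (s - 1) := by omega
    rw [mul_pow, ← pow_mul, h2s, pow_add, ← mul_assoc, mul_div_assoc,
      div_self (by positivity), mul_one]
  -- descFactorial bound
  have hdesc : ∑ v, g v ^ s ≤ ∑ v, ((G.degree v).descFactorial s : ℝ) := by
    refine Finset.sum_le_sum fun v _ => ?_
    have h1 : g v ≤ ((G.degree v - s : ℕ) : ℝ) := by
      rcases le_total s (G.degree v) with h | h
      · rw [Nat.cast_sub h]
        exact max_le le_rfl (by simp; exact_mod_cast h)
      · have : G.degree v - s = 0 := Nat.sub_eq_zero_of_le h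
        rw [this, Nat.cast_zero]
        exact max_le (by simp; exact_mod_cast h) le_rfl
    calc g v ^ s ≤ ((G.degree v - s : ℕ) : ℝ) ^ s := pow_le_pow_left₀ (hg_nn v) h1 s
      _ = (((G.degree v - s) ^ s : ℕ) : ℝ) := by push_cast; ring
      _ ≤ ((G.degree v).descFactorial s : ℝ) := by
          have : (G.degree v - s) ^ s ≤ (G.degree v).descFactorial s := by
            calc (G.degree v - s) ^ s ≤ (G.degree v + 1 - s) ^ s :=
                  Nat.pow_le_pow_left (by omega) s
              _ ≤ (G.degree v).descFactorial s := Nat.pow_sub_le_descFactorial _ s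
          exact_mod_cast this
  -- total sum over injective tuples
  set Inj : Finset (Fin s → V) := univ.filter (fun f => Function.Injective f) with hInj_def
  set F : (Fin s → V) → ℕ := fun f => (univ.filter (fun v => ∀ i, G.Adj (f i) v)).card
    with hF_def
  have htot : (c / 2) ^ s * (n : ℝ) ^ (s + 1) ≤ ∑ f ∈ Inj, (F f : ℝ) := by
    have := swap_sum_aux G s
    have hcast : ∑ f ∈ Inj, (F f : ℝ) = ∑ v, ((G.degree v).descFactorial s : ℝ) := by
      rw [← Nat.cast_sum, ← Nat.cast_sum]
      exact_mod_cast congrArg (Nat.cast : ℕ → ℝ) this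
    rw [hcast, ← hlhs]
    exact le_trans hpm hdesc
  -- key strict inequality  B < (c/2)^s * n
  have hkeyB : (n : ℝ) ^ ((1 : ℝ) - c) < (c / 2) ^ s * (n : ℝ) := by
    have hc2 : (0 : ℝ) < c / 2 := by linarith
    have hrw : (c / 2) ^ s * (n : ℝ)
        = Real.exp ((s : ℝ) * Real.log (c / 2) + Real.log n) := by
      rw [Real.exp_add, Real.exp_nat_mul, Real.exp_log hc2, Real.exp_log hn0R]
    rw [hrw, Real.rpow_def_of_pos hn0R]
    apply Real.exp_lt_exp.mpr
    have hlog2c : Real.log (c / 2) = - Real.log (2 / c) := by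
      rw [← Real.log_inv, inv_div]
    have hT0 : 0 < Real.log (2 / c) := Real.log_pos (by rw [lt_div_iff₀ hc0]; linarith)
    have hTle : Real.log (2 / c) ≤ 2 / c := by
      have := Real.log_le_sub_one_of_pos (show (0:ℝ) < 2 / c by positivity)
      linarith
    have hmain : (s : ℝ) * Real.log (2 / c) < c * Real.log n := by
      calc (s : ℝ) * Real.log (2 / c) ≤ (c ^ 4 * Real.log n) * Real.log (2 / c) :=
            mul_le_mul_of_nonneg_right hs_le hT0.le
        _ ≤ (c ^ 4 * Real.log n) * (2 / c) := by
            apply mul_le_mul_of_nonneg_left hTle (by positivity)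
        _ = 2 * c ^ 3 * Real.log n := by field_simp
        _ ≤ (1 / 2) * c * Real.log n := by
            have hc2sq : c ^ 2 ≤ 1 / 4 := by nlinarith
            nlinarith [mul_le_mul_of_nonneg_right
              (mul_le_mul_of_nonneg_right hc2sq hc0.le) hL0.le]
        _ < c * Real.log n := by nlinarith
    rw [hlog2c]
    linarith [hmain]
  -- pigeonhole
  have hex : ∃ f, Function.Injective f ∧ (n : ℝ) ^ ((1 : ℝ) - c) < (F f : ℝ) := by
    by_contra hcon
    push_neg at hcon
    have hub : ∑ f ∈ Inj, (F f : ℝ) ≤ (Inj.card : ℝ) * ((n : ℝ) ^ ((1 : ℝ) - c)) := by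
      calc ∑ f ∈ Inj, (F f : ℝ) ≤ ∑ f ∈ Inj, (n : ℝ) ^ ((1 : ℝ) - c) := by
            refine Finset.sum_le_sum fun f hf => ?_
            exact hcon f (Finset.mem_filter.mp hf).2
        _ = (Inj.card : ℝ) * ((n : ℝ) ^ ((1 : ℝ) - c)) := by
            rw [Finset.sum_const, nsmul_eq_mul]
    have hInjcard : (Inj.card : ℝ) ≤ (n : ℝ) ^ s := by
      have h1 : Inj.card ≤ Fintype.card (Fin s → V) := by
        rw [← Finset.card_univ]; exact Finset.card_filter_le _ _
      have h2 : Fintype.card (Fin s → V) = n ^ s := by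
        rw [Fintype.card_fun, Fintype.card_fin, hn]
      rw [h2] at h1
      exact_mod_cast h1
    have hstep : (Inj.card : ℝ) * ((n : ℝ) ^ ((1 : ℝ) - c)) <
        (c / 2) ^ s * (n : ℝ) ^ (s + 1) := by
      calc (Inj.card : ℝ) * ((n : ℝ) ^ ((1 : ℝ) - c))
          ≤ (n : ℝ) ^ s * ((n : ℝ) ^ ((1 : ℝ) - c)) :=
            mul_le_mul_of_nonneg_right hInjcard hBnn
        _ < (n : ℝ) ^ s * ((c / 2) ^ s * (n : ℝ)) := by
            apply mul_lt_mul_of_pos_left hkeyB (by positivity)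
        _ = (c / 2) ^ s * (n : ℝ) ^ (s + 1) := by ring
    linarith
  obtain ⟨f, hfi, hfB⟩ := hex
  refine ⟨univ.image f, univ.filter (fun v => ∀ i, G.Adj (f i) v), ?_, ?_, hfB, ?_⟩
  · rw [Finset.disjoint_left]
    rintro a haS haT
    obtain ⟨i, -, rfl⟩ := Finset.mem_image.mp haS
    exact G.irrefl ((Finset.mem_filter.mp haT).2 i)
  · rw [Finset.card_image_of_injective _ hfi, Finset.card_univ, Fintype.card_fin]
  · intro u hu v hv
    obtain ⟨i, -, rfl⟩ := Finset.mem_image.mp hu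
    exact (Finset.mem_filter.mp hv).2 i
end
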